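/- Let f ∈ (T_n(R))[x] with coefficients F_k = (f_{ij}^{(k)}), set f_{ih} := Σ_k f_{ih}^{(k)} x^k ∈ R[x], and let C ∈ T_n(R). Then for 1 ≤ i ≤ j ≤ n, the (i,j)-entry of f(C) := Σ_k F_k C^k equals Σ_{h=i}^{j} [f_{ih}(C)]_{h j}, where [f_{ih}(C)]_{h j} denotes the (h,j)-entry of the evaluation of the scalar polynomial f_{ih} at C. -/
import Mathlib


/-- For `f ∈ (Tₙ(R))[x]` with coefficients `F_k` and `C ∈ Tₙ(R)`, and `i ≤ j`,
the `(i,j)`-entry of the right evaluation `f(C) = Σ_k F_k C^k` equals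
`Σ_{h=i}^{j} [f_{ih}(C)]_{hj}`, where `f_{ih} = Σ_k (F_k)_{ih} x^k ∈ R[x]`. -/
theorem stmt5 (n : ℕ) (R : Type*) [CommRing R]
    (f : Polynomial (Matrix (Fin n) (Fin n) R))
    (hf : ∀ k, (f.coeff k).BlockTriangular id)
    (C : Matrix (Fin n) (Fin n) R) (hC : C.BlockTriangular id)
    (i j : Fin n) (hij : i ≤ j) :
    f.eval C i j =
      ∑ h ∈ Finset.Icc i j,
        (Polynomial.aeval C
          (∑ k ∈ f.support, Polynomial.C (f.coeff k i h) * Polynomial.X ^ k)) h j := by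
  have hCk : ∀ k : ℕ, (C ^ k).BlockTriangular id := by
    intro k
    induction k with
    | zero => simpa using Matrix.blockTriangular_one
    | succ m ih => rw [pow_succ]; exact ih.mul hC
  have hR : ∀ h : Fin n, (Polynomial.aeval C
      (∑ k ∈ f.support, Polynomial.C (f.coeff k i h) * Polynomial.X ^ k)) h j
      = ∑ k ∈ f.support, f.coeff k i h * (C ^ k) h j := by
    intro h
    rw [map_sum, Matrix.sum_apply]
    refine Finset.sum_congr rfl fun k _ => ?_
    rw [map_mul, Polynomial.aeval_C, map_pow, Polynomial.aeval_X,
      ← Algebra.smul_def,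
      Matrix.smul_apply, smul_eq_mul]
  simp_rw [hR]
  rw [Finset.sum_comm, Polynomial.eval_eq_sum, Polynomial.sum, Matrix.sum_apply]
  refine Finset.sum_congr rfl fun k _ => ?_
  rw [Matrix.mul_apply]
  refine (Finset.sum_subset (Finset.subset_univ _) fun h _ hh => ?_).symm
  simp only [Finset.mem_Icc, not_and_or, not_le] at hh
  rcases hh with hh | hh
  · rw [hf k hh, zero_mul]
  · rw [hCk k hh, mul_zero]
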